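/- There is a constant $C$, depending only on $d_1$, $d_2$ and $\max_i\|J_i\|$, such that the following holds for every $0<\rho\le 1$: if $f\in L^1(\mathbb{R}^{d_1}\times\mathbb{R}^{d_2})$ is supported in $\{(y,v): |y|\le\rho,\ |v|\le\rho\}$ and satisfies $\iint f(y,v)\,dy\,dv = 0$, and if $H\in C^1(\mathbb{R}^{d_1}\times\mathbb{R}^{d_2})$ is such that $H$, $\nabla_x H$ and $\nabla_u H$ are integrable and $\iint |x|\,|\nabla_u H(x,u)|\,dx\,du<\infty$, then $\|f*H\|_{L^1} \;\le\; C\,\rho\,\|f\|_{L^1}\Big(\|\nabla_x H\|_{L^1} + \|\nabla_u H\|_{L^1} + \iint |x|\,|\nabla_u H(x,u)|\,dx\,du\Big)$. -/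

import Mathlib

open MeasureTheory Matrix
set_option maxHeartbeats 1000000

/-- The Euclidean norm on `Fin d → ℝ`. -/
noncomputable def eNorm' (d : ℕ) (x : Fin d → ℝ) : ℝ := Real.sqrt (∑ j, x j ^ 2)

/-- The Euclidean length `|∇_x H(p)|` of the gradient of `H` in the first group of
variables. -/
noncomputable def gradXNorm (d₁ d₂ : ℕ) (H : (Fin d₁ → ℝ) × (Fin d₂ → ℝ) → ℂ)
    (p : (Fin d₁ → ℝ) × (Fin d₂ → ℝ)) : ℝ :=
  Real.sqrt (∑ j : Fin d₁, ‖fderiv ℝ H p (Pi.single j 1, 0)‖ ^ 2)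

/-- The Euclidean length `|∇_u H(p)|` of the gradient of `H` in the second group of
variables. -/
noncomputable def gradUNorm (d₁ d₂ : ℕ) (H : (Fin d₁ → ℝ) × (Fin d₂ → ℝ) → ℂ)
    (p : (Fin d₁ → ℝ) × (Fin d₂ → ℝ)) : ℝ :=
  Real.sqrt (∑ i : Fin d₂, ‖fderiv ℝ H p (0, Pi.single i 1)‖ ^ 2)

/-- The group convolution `f * H` on the group `ℝ^{d₁} × ℝ^{d₂}` with law
`(x,u)·(x',u') = (x+x', u+u'+½⟨J⃗x,x'⟩)`. -/
noncomputable def heisConv (d₁ d₂ : ℕ) (J : Fin d₂ → Matrix (Fin d₁) (Fin d₁) ℝ)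
    (f H : (Fin d₁ → ℝ) × (Fin d₂ → ℝ) → ℂ)
    (p : (Fin d₁ → ℝ) × (Fin d₂ → ℝ)) : ℂ :=
  ∫ q : (Fin d₁ → ℝ) × (Fin d₂ → ℝ),
    f q * H (p.1 - q.1, p.2 - q.2 + (1/2 : ℝ) • fun i => (J i).mulVec p.1 ⬝ᵥ q.1)

/-! ### Auxiliary lemmas -/

lemma eNorm'_nonneg (d : ℕ) (x : Fin d → ℝ) : 0 ≤ eNorm' d x := Real.sqrt_nonneg _

lemma abs_le_eNorm' (d : ℕ) (x : Fin d → ℝ) (j : Fin d) : |x j| ≤ eNorm' d x := by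
  rw [← Real.sqrt_sq_eq_abs]
  exact Real.sqrt_le_sqrt (Finset.single_le_sum (f := fun j => x j ^ 2)
    (fun i _ => sq_nonneg _) (Finset.mem_univ j))

lemma eNorm'_neg (d : ℕ) (x : Fin d → ℝ) : eNorm' d (-x) = eNorm' d x := by
  simp [eNorm']

lemma eNorm'_add (d : ℕ) (x y : Fin d → ℝ) : eNorm' d (x + y) ≤ eNorm' d x + eNorm' d y := by
  have h : ∀ z : Fin d → ℝ, eNorm' d z = ‖(WithLp.equiv 2 (Fin d → ℝ)).symm z‖ := by
    intro z
    rw [EuclideanSpace.norm_eq]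
    simp [eNorm', sq_abs]
  rw [h, h, h]
  exact norm_add_le _ _

lemma eNorm'_smul (d : ℕ) (r : ℝ) (x : Fin d → ℝ) : eNorm' d (r • x) = |r| * eNorm' d x := by
  simp only [eNorm', Pi.smul_apply, smul_eq_mul, mul_pow, ← Finset.mul_sum]
  rw [Real.sqrt_mul (sq_nonneg r), Real.sqrt_sq_eq_abs]

lemma eNorm'_le_sum (d : ℕ) (x : Fin d → ℝ) : eNorm' d x ≤ ∑ i, |x i| := by
  have h1 : (∑ j, x j ^ 2) = ∑ j, |x j| ^ 2 := by simp [sq_abs]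
  rw [eNorm', h1]
  calc Real.sqrt (∑ j, |x j| ^ 2) ≤ Real.sqrt ((∑ j, |x j|) ^ 2) :=
        Real.sqrt_le_sqrt (Finset.sum_sq_le_sq_sum_of_nonneg fun i _ => abs_nonneg _)
    _ = ∑ j, |x j| := Real.sqrt_sq (Finset.sum_nonneg fun i _ => abs_nonneg _)

lemma continuous_eNorm' (d : ℕ) : Continuous (eNorm' d) :=
  Real.continuous_sqrt.comp (continuous_finset_sum _ fun j _ => (continuous_apply j).pow 2)

/-- Frobenius-type bound for the bilinear twist vector. -/
lemma vecJ_bound (d₁ d₂ : ℕ) (J : Fin d₂ → Matrix (Fin d₁) (Fin d₁) ℝ) (x y : Fin d₁ → ℝ) :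
    eNorm' d₂ (fun i => (J i).mulVec x ⬝ᵥ y)
      ≤ (∑ i, ∑ j, ∑ k, |J i j k|) * eNorm' d₁ x * eNorm' d₁ y := by
  have h1 : ∀ i : Fin d₂, |(J i).mulVec x ⬝ᵥ y|
      ≤ (∑ j, ∑ k, |J i j k|) * eNorm' d₁ x * eNorm' d₁ y := by
    intro i
    simp only [Matrix.mulVec, dotProduct]
    calc |∑ j, (∑ k, J i j k * x k) * y j| ≤ ∑ j, |(∑ k, J i j k * x k) * y j| :=
          Finset.abs_sum_le_sum_abs _ _
      _ ≤ ∑ j, (∑ k, |J i j k|) * eNorm' d₁ x * eNorm' d₁ y := by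
          refine Finset.sum_le_sum fun j _ => ?_
          rw [abs_mul]
          have h2 : |∑ k, J i j k * x k| ≤ (∑ k, |J i j k|) * eNorm' d₁ x := by
            calc |∑ k, J i j k * x k| ≤ ∑ k, |J i j k * x k| := Finset.abs_sum_le_sum_abs _ _
              _ ≤ ∑ k, |J i j k| * eNorm' d₁ x := Finset.sum_le_sum fun k _ => by
                  rw [abs_mul]
                  exact mul_le_mul_of_nonneg_left (abs_le_eNorm' _ _ _) (abs_nonneg _)
              _ = _ := by rw [← Finset.sum_mul]
          exact mul_le_mul h2 (abs_le_eNorm' _ _ _) (abs_nonneg _)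
            (mul_nonneg (Finset.sum_nonneg fun k _ => abs_nonneg _) (eNorm'_nonneg _ _))
      _ = (∑ j, ∑ k, |J i j k|) * eNorm' d₁ x * eNorm' d₁ y := by
          rw [← Finset.sum_mul, ← Finset.sum_mul]
  calc eNorm' d₂ (fun i => (J i).mulVec x ⬝ᵥ y) ≤ ∑ i, |(J i).mulVec x ⬝ᵥ y| :=
        eNorm'_le_sum _ _
    _ ≤ ∑ i : Fin d₂, (∑ j, ∑ k, |J i j k|) * eNorm' d₁ x * eNorm' d₁ y :=
        Finset.sum_le_sum fun i _ => h1 i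
    _ = _ := by rw [← Finset.sum_mul, ← Finset.sum_mul]

lemma continuous_vecJ (d₁ d₂ : ℕ) (J : Fin d₂ → Matrix (Fin d₁) (Fin d₁) ℝ) :
    Continuous fun xy : (Fin d₁ → ℝ) × (Fin d₁ → ℝ) =>
      (fun i => (J i).mulVec xy.1 ⬝ᵥ xy.2 : Fin d₂ → ℝ) := by
  refine continuous_pi fun i => ?_
  simp only [Matrix.mulVec, dotProduct]
  exact continuous_finset_sum _ fun j _ =>
    (continuous_finset_sum _ fun k _ =>
      (continuous_const.mul ((continuous_apply k).comp continuous_fst))).mul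
      ((continuous_apply j).comp continuous_snd)

lemma gradXNorm_nonneg (d₁ d₂ : ℕ) (H : (Fin d₁ → ℝ) × (Fin d₂ → ℝ) → ℂ)
    (p : (Fin d₁ → ℝ) × (Fin d₂ → ℝ)) : 0 ≤ gradXNorm d₁ d₂ H p := Real.sqrt_nonneg _

lemma gradUNorm_nonneg (d₁ d₂ : ℕ) (H : (Fin d₁ → ℝ) × (Fin d₂ → ℝ) → ℂ)
    (p : (Fin d₁ → ℝ) × (Fin d₂ → ℝ)) : 0 ≤ gradUNorm d₁ d₂ H p := Real.sqrt_nonneg _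

lemma clm_apply_bound (d₁ d₂ : ℕ) (L : ((Fin d₁ → ℝ) × (Fin d₂ → ℝ)) →L[ℝ] ℂ)
    (v : Fin d₁ → ℝ) (w : Fin d₂ → ℝ) :
    ‖L (v, w)‖ ≤ eNorm' d₁ v * Real.sqrt (∑ j : Fin d₁, ‖L (Pi.single j 1, 0)‖ ^ 2)
      + eNorm' d₂ w * Real.sqrt (∑ i : Fin d₂, ‖L (0, Pi.single i 1)‖ ^ 2) := by
  have hv : (v, (0 : Fin d₂ → ℝ)) = ∑ j : Fin d₁, v j • ((Pi.single j 1 : Fin d₁ → ℝ), (0 : Fin d₂ → ℝ)) := by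
    ext k
    · simp [Prod.fst_sum, Finset.sum_apply, Pi.single_apply, mul_comm]
    · simp [Prod.snd_sum, Finset.sum_apply]
  have hw : ((0 : Fin d₁ → ℝ), w) = ∑ i : Fin d₂, w i • ((0 : Fin d₁ → ℝ), (Pi.single i 1 : Fin d₂ → ℝ)) := by
    ext k
    · simp [Prod.fst_sum, Finset.sum_apply]
    · simp [Prod.snd_sum, Finset.sum_apply, Pi.single_apply, mul_comm]
  have hsplit : (v, w) = (v, (0 : Fin d₂ → ℝ)) + ((0 : Fin d₁ → ℝ), w) := by simp
  rw [hsplit, map_add, hv, hw, map_sum, map_sum]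
  refine (norm_add_le _ _).trans (add_le_add ?_ ?_)
  · refine (norm_sum_le _ _).trans ?_
    have : ∀ j : Fin d₁, ‖L (v j • ((Pi.single j 1 : Fin d₁ → ℝ), (0 : Fin d₂ → ℝ)))‖
        = |v j| * ‖L ((Pi.single j 1 : Fin d₁ → ℝ), (0 : Fin d₂ → ℝ))‖ := by
      intro j; rw [L.map_smul, norm_smul, Real.norm_eq_abs]
    rw [Finset.sum_congr rfl fun j _ => this j]
    calc ∑ j : Fin d₁, |v j| * ‖L ((Pi.single j 1 : Fin d₁ → ℝ), (0 : Fin d₂ → ℝ))‖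
        ≤ Real.sqrt (∑ j, |v j| ^ 2) * Real.sqrt (∑ j : Fin d₁, ‖L ((Pi.single j 1 : Fin d₁ → ℝ), (0:Fin d₂ → ℝ))‖ ^ 2) :=
          Real.sum_mul_le_sqrt_mul_sqrt _ _ _
      _ = _ := by simp [eNorm', sq_abs]
  · refine (norm_sum_le _ _).trans ?_
    have : ∀ i : Fin d₂, ‖L (w i • ((0 : Fin d₁ → ℝ), (Pi.single i 1 : Fin d₂ → ℝ)))‖
        = |w i| * ‖L ((0 : Fin d₁ → ℝ), (Pi.single i 1 : Fin d₂ → ℝ))‖ := by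
      intro i; rw [L.map_smul, norm_smul, Real.norm_eq_abs]
    rw [Finset.sum_congr rfl fun i _ => this i]
    calc ∑ i : Fin d₂, |w i| * ‖L ((0 : Fin d₁ → ℝ), (Pi.single i 1 : Fin d₂ → ℝ))‖
        ≤ Real.sqrt (∑ i, |w i| ^ 2) * Real.sqrt (∑ i : Fin d₂, ‖L ((0:Fin d₁ → ℝ), (Pi.single i 1 : Fin d₂ → ℝ))‖ ^ 2) :=
          Real.sum_mul_le_sqrt_mul_sqrt _ _ _
      _ = _ := by simp [eNorm', sq_abs]

lemma fderiv_apply_bound (d₁ d₂ : ℕ) (H : (Fin d₁ → ℝ) × (Fin d₂ → ℝ) → ℂ)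
    (y : (Fin d₁ → ℝ) × (Fin d₂ → ℝ)) (v : Fin d₁ → ℝ) (w : Fin d₂ → ℝ) :
    ‖fderiv ℝ H y (v, w)‖ ≤ eNorm' d₁ v * gradXNorm d₁ d₂ H y
      + eNorm' d₂ w * gradUNorm d₁ d₂ H y :=
  clm_apply_bound d₁ d₂ (fderiv ℝ H y) v w

/-- FTC segment bound. -/
lemma norm_sub_le_integral (d₁ d₂ : ℕ) (H : (Fin d₁ → ℝ) × (Fin d₂ → ℝ) → ℂ)
    (hH : ContDiff ℝ 1 H) (a δ : (Fin d₁ → ℝ) × (Fin d₂ → ℝ)) :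
    ‖H (a + δ) - H a‖ ≤ ∫ t in (0:ℝ)..1, ‖fderiv ℝ H (a + t • δ) δ‖ := by
  set g : ℝ → ℂ := fun t => H (a + t • δ) with hg
  have hd : ∀ t : ℝ, HasDerivAt g (fderiv ℝ H (a + t • δ) δ) t := by
    intro t
    have h1 : HasDerivAt (fun t : ℝ => a + t • δ) δ t := by
      simpa using ((hasDerivAt_id t).smul_const δ).const_add a
    exact (((hH.differentiable one_ne_zero) (a + t • δ)).hasFDerivAt).comp_hasDerivAt t h1
  have hcont : Continuous fun t : ℝ => fderiv ℝ H (a + t • δ) δ := by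
    have h1 : Continuous fun t : ℝ => a + t • δ := by continuity
    exact ((hH.continuous_fderiv one_ne_zero).comp h1).clm_apply continuous_const
  have heq : ∫ t in (0:ℝ)..1, fderiv ℝ H (a + t • δ) δ = g 1 - g 0 :=
    intervalIntegral.integral_eq_sub_of_hasDerivAt (fun t _ => hd t)
      (hcont.intervalIntegrable 0 1)
  have : H (a + δ) - H a = ∫ t in (0:ℝ)..1, fderiv ℝ H (a + t • δ) δ := by
    rw [heq]; simp [hg]
  rw [this]
  exact intervalIntegral.norm_integral_le_integral_norm (by norm_num)

/-- A shear map preserves the product volume. -/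
lemma shear_measurePreserving (d₁ d₂ : ℕ) (c : Fin d₁ → ℝ)
    (L : (Fin d₁ → ℝ) → (Fin d₂ → ℝ)) (hL : Measurable L) :
    MeasurePreserving (fun p : (Fin d₁ → ℝ) × (Fin d₂ → ℝ) => (p.1 + c, p.2 + L p.1))
      volume volume := by
  rw [Measure.volume_eq_prod]
  exact (measurePreserving_add_right volume c).skew_product (μd := volume)
    (g := fun a u => u + L a)
    (show Measurable fun p : (Fin d₁ → ℝ) × (Fin d₂ → ℝ) => p.2 + L p.1 from
      measurable_snd.add (hL.comp measurable_fst))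
    (Filter.Eventually.of_forall fun a => map_add_right_eq_self volume (L a))

/-- The full gradient weight. -/
noncomputable def heisG (d₁ d₂ : ℕ) (H : (Fin d₁ → ℝ) × (Fin d₂ → ℝ) → ℂ)
    (y : (Fin d₁ → ℝ) × (Fin d₂ → ℝ)) : ℝ :=
  gradXNorm d₁ d₂ H y + gradUNorm d₁ d₂ H y + eNorm' d₁ y.1 * gradUNorm d₁ d₂ H y

lemma heisG_nonneg (d₁ d₂ : ℕ) (H : (Fin d₁ → ℝ) × (Fin d₂ → ℝ) → ℂ)
    (y : (Fin d₁ → ℝ) × (Fin d₂ → ℝ)) : 0 ≤ heisG d₁ d₂ H y :=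
  add_nonneg (add_nonneg (gradXNorm_nonneg _ _ _ _) (gradUNorm_nonneg _ _ _ _))
    (mul_nonneg (eNorm'_nonneg _ _) (gradUNorm_nonneg _ _ _ _))

lemma continuous_gradXNorm (d₁ d₂ : ℕ) (H : (Fin d₁ → ℝ) × (Fin d₂ → ℝ) → ℂ)
    (hH : ContDiff ℝ 1 H) : Continuous (gradXNorm d₁ d₂ H) :=
  Real.continuous_sqrt.comp (continuous_finset_sum _ fun j _ =>
    (((hH.continuous_fderiv one_ne_zero).clm_apply continuous_const).norm.pow 2))

lemma continuous_gradUNorm (d₁ d₂ : ℕ) (H : (Fin d₁ → ℝ) × (Fin d₂ → ℝ) → ℂ)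
    (hH : ContDiff ℝ 1 H) : Continuous (gradUNorm d₁ d₂ H) :=
  Real.continuous_sqrt.comp (continuous_finset_sum _ fun j _ =>
    (((hH.continuous_fderiv one_ne_zero).clm_apply continuous_const).norm.pow 2))

lemma continuous_heisG (d₁ d₂ : ℕ) (H : (Fin d₁ → ℝ) × (Fin d₂ → ℝ) → ℂ)
    (hH : ContDiff ℝ 1 H) : Continuous (heisG d₁ d₂ H) :=
  ((continuous_gradXNorm d₁ d₂ H hH).add (continuous_gradUNorm d₁ d₂ H hH)).add
    (((continuous_eNorm' d₁).comp continuous_fst).mul (continuous_gradUNorm d₁ d₂ H hH))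

/-- The key local translation estimate. -/
lemma key_local (d₁ d₂ : ℕ) (J : Fin d₂ → Matrix (Fin d₁) (Fin d₁) ℝ)
    (ρ : ℝ) (hρ : 0 < ρ) (hρ1 : ρ ≤ 1)
    (H : (Fin d₁ → ℝ) × (Fin d₂ → ℝ) → ℂ) (hH : ContDiff ℝ 1 H)
    (q : (Fin d₁ → ℝ) × (Fin d₂ → ℝ)) (hq1 : eNorm' d₁ q.1 ≤ ρ) (hq2 : eNorm' d₂ q.2 ≤ ρ) :
    ∫⁻ p : (Fin d₁ → ℝ) × (Fin d₂ → ℝ),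
        (‖H (p.1 - q.1, p.2 - q.2 + (1/2 : ℝ) • fun i => (J i).mulVec p.1 ⬝ᵥ q.1) - H p‖₊ : ENNReal)
      ≤ ∫⁻ y, ENNReal.ofReal (ρ * (1 + ∑ i, ∑ j, ∑ k, |J i j k|) * heisG d₁ d₂ H y) := by
  set c₁ : ℝ := ∑ i, ∑ j, ∑ k, |J i j k| with hc₁def
  have hc₁ : 0 ≤ c₁ := Finset.sum_nonneg fun _ _ => Finset.sum_nonneg fun _ _ =>
    Finset.sum_nonneg fun _ _ => abs_nonneg _
  set δp : (Fin d₁ → ℝ) × (Fin d₂ → ℝ) → (Fin d₁ → ℝ) × (Fin d₂ → ℝ) :=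
    fun p => (-q.1, -q.2 + (1/2 : ℝ) • fun i => (J i).mulVec p.1 ⬝ᵥ q.1) with hδp
  have hA : ∀ p : (Fin d₁ → ℝ) × (Fin d₂ → ℝ),
      (p.1 - q.1, p.2 - q.2 + (1/2 : ℝ) • fun i => (J i).mulVec p.1 ⬝ᵥ q.1) = p + δp p := by
    intro p
    refine Prod.ext ?_ ?_
    · simp [hδp, sub_eq_add_neg]
    · show p.2 - q.2 + _ = p.2 + (δp p).2
      simp only [hδp]
      rw [sub_eq_add_neg, add_assoc]
  have hvec : Continuous fun x : Fin d₁ → ℝ =>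
      (fun i => (J i).mulVec x ⬝ᵥ q.1 : Fin d₂ → ℝ) :=
    (continuous_vecJ d₁ d₂ J).comp (continuous_id.prodMk continuous_const)
  have hδpc : Continuous δp :=
    continuous_const.prodMk (continuous_const.add ((hvec.comp continuous_fst).const_smul (1/2 : ℝ)))


  have hGc : Continuous fun y => ρ * (1 + c₁) * heisG d₁ d₂ H y :=
    continuous_const.mul (continuous_heisG d₁ d₂ H hH)
  have hGm : Measurable fun y => ENNReal.ofReal (ρ * (1 + c₁) * heisG d₁ d₂ H y) :=
    hGc.measurable.ennreal_ofReal
  -- pointwise gradient bound along the segment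
  have keypt : ∀ (p : (Fin d₁ → ℝ) × (Fin d₂ → ℝ)) (t : ℝ), t ∈ Set.Icc (0:ℝ) 1 →
      ‖fderiv ℝ H (p + t • δp p) (δp p)‖ ≤ ρ * (1 + c₁) * heisG d₁ d₂ H (p + t • δp p) := by
    intro p t ht
    set y := p + t • δp p with hy
    have h1 : eNorm' d₁ (δp p).1 ≤ ρ := by
      simp only [hδp]
      rw [eNorm'_neg]; exact hq1
    have hyp1 : p.1 = y.1 + t • q.1 := by
      rw [hy]
      show p.1 = (p.1 + t • (δp p).1) + t • q.1
      simp only [hδp]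
      rw [smul_neg]
      abel
    have hp1 : eNorm' d₁ p.1 ≤ eNorm' d₁ y.1 + ρ := by
      rw [hyp1]
      refine (eNorm'_add _ _ _).trans ?_
      rw [eNorm'_smul]
      have h2 : |t| ≤ 1 := abs_le.mpr ⟨by linarith [ht.1], ht.2⟩
      have h3 : |t| * eNorm' d₁ q.1 ≤ 1 * ρ :=
        mul_le_mul h2 hq1 (eNorm'_nonneg _ _) one_pos.le
      linarith
    have h2 : eNorm' d₂ (δp p).2 ≤ ρ * (1 + c₁) + ρ * c₁ * eNorm' d₁ y.1 := by
      have hv := vecJ_bound d₁ d₂ J p.1 q.1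
      have e1 : eNorm' d₂ (δp p).2 ≤ ρ + (1/2) * (c₁ * eNorm' d₁ p.1 * eNorm' d₁ q.1) := by
        show eNorm' d₂ (-q.2 + (1/2 : ℝ) • fun i => (J i).mulVec p.1 ⬝ᵥ q.1) ≤ _
        refine (eNorm'_add _ _ _).trans ?_
        rw [eNorm'_neg, eNorm'_smul]
        have h05 : |(1/2 : ℝ)| = 1/2 := by norm_num
        rw [h05]
        rw [hc₁def]
        linarith
      have e2 : c₁ * eNorm' d₁ p.1 * eNorm' d₁ q.1 ≤ (c₁ * (eNorm' d₁ y.1 + ρ)) * ρ :=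
        mul_le_mul (mul_le_mul_of_nonneg_left hp1 hc₁) hq1 (eNorm'_nonneg _ _)
          (mul_nonneg hc₁ (by linarith [eNorm'_nonneg d₁ y.1]))
      nlinarith [eNorm'_nonneg d₁ y.1, mul_nonneg (mul_nonneg hc₁ hρ.le) (eNorm'_nonneg d₁ y.1),
        mul_le_mul_of_nonneg_left hρ1 (mul_nonneg hc₁ hρ.le)]
    have hb := fderiv_apply_bound d₁ d₂ H y (δp p).1 (δp p).2
    rw [Prod.mk.eta] at hb
    refine hb.trans ?_
    have g1 := gradXNorm_nonneg d₁ d₂ H y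
    have g2 := gradUNorm_nonneg d₁ d₂ H y
    have g3 := eNorm'_nonneg d₁ y.1
    unfold heisG
    nlinarith [mul_le_mul_of_nonneg_right h1 g1, mul_le_mul_of_nonneg_right h2 g2,
      mul_nonneg (mul_nonneg hρ.le hc₁) g1, mul_nonneg (mul_nonneg hρ.le g3) g2]
  -- per-point FTC bound
  have hFc : ∀ p : (Fin d₁ → ℝ) × (Fin d₂ → ℝ),
      Continuous fun t : ℝ => ‖fderiv ℝ H (p + t • δp p) (δp p)‖ := by
    intro p
    have h1 : Continuous fun t : ℝ => p + t • δp p :=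
      continuous_const.add (continuous_id.smul continuous_const)
    exact (((hH.continuous_fderiv one_ne_zero).comp h1).clm_apply continuous_const).norm
  have hpt : ∀ p : (Fin d₁ → ℝ) × (Fin d₂ → ℝ), (‖H (p + δp p) - H p‖₊ : ENNReal)
      ≤ ∫⁻ t in Set.Ioc (0:ℝ) 1,
          ENNReal.ofReal (ρ * (1 + c₁) * heisG d₁ d₂ H (p + t • δp p)) := by
    intro p
    refine (le_of_eq (ofReal_norm (H (p + δp p) - H p)).symm).trans ?_
    refine le_trans (ENNReal.ofReal_le_ofReal (norm_sub_le_integral d₁ d₂ H hH p (δp p))) ?_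
    rw [intervalIntegral.integral_of_le zero_le_one]
    rw [ofReal_integral_eq_lintegral_ofReal ((hFc p).integrableOn_Ioc)
      (ae_of_all _ fun t => norm_nonneg _)]
    refine setLIntegral_mono (hGm.comp
      (continuous_const.add (continuous_id.smul continuous_const)).measurable)
      fun t ht => ENNReal.ofReal_le_ofReal (keypt p t ⟨ht.1.le, ht.2⟩)
  have step1 : (∫⁻ p : (Fin d₁ → ℝ) × (Fin d₂ → ℝ),
        (‖H (p.1 - q.1, p.2 - q.2 + (1/2 : ℝ) • fun i => (J i).mulVec p.1 ⬝ᵥ q.1) - H p‖₊ : ENNReal))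
      = ∫⁻ p, (‖H (p + δp p) - H p‖₊ : ENNReal) := by
    refine lintegral_congr fun p => ?_
    rw [hA p]
  have step2 : (∫⁻ p, (‖H (p + δp p) - H p‖₊ : ENNReal))
      ≤ ∫⁻ p, ∫⁻ t in Set.Ioc (0:ℝ) 1,
          ENNReal.ofReal (ρ * (1 + c₁) * heisG d₁ d₂ H (p + t • δp p)) := lintegral_mono hpt
  have step3 : (∫⁻ p, ∫⁻ t in Set.Ioc (0:ℝ) 1,
          ENNReal.ofReal (ρ * (1 + c₁) * heisG d₁ d₂ H (p + t • δp p)))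
      = ∫⁻ t in Set.Ioc (0:ℝ) 1, ∫⁻ p,
          ENNReal.ofReal (ρ * (1 + c₁) * heisG d₁ d₂ H (p + t • δp p)) := by
    refine lintegral_lintegral_swap ?_
    have hjoint : Continuous fun z : ((Fin d₁ → ℝ) × (Fin d₂ → ℝ)) × ℝ =>
        z.1 + z.2 • δp z.1 :=
      continuous_fst.add (continuous_snd.smul (hδpc.comp continuous_fst))
    exact ((hGc.comp hjoint).measurable.ennreal_ofReal).aemeasurable
  have step4 : ∀ t : ℝ, (∫⁻ p, ENNReal.ofReal (ρ * (1 + c₁) * heisG d₁ d₂ H (p + t • δp p)))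
      = ∫⁻ y, ENNReal.ofReal (ρ * (1 + c₁) * heisG d₁ d₂ H y) := by
    intro t
    have hL : Measurable fun x : Fin d₁ → ℝ =>
        t • ((-q.2) + (1/2 : ℝ) • fun i => (J i).mulVec x ⬝ᵥ q.1) :=
      ((continuous_const.add (hvec.const_smul (1/2 : ℝ))).const_smul t).measurable
    have hmp := shear_measurePreserving d₁ d₂ (-(t • q.1)) _ hL
    have hTeq : ∀ p : (Fin d₁ → ℝ) × (Fin d₂ → ℝ), p + t • δp p
        = (p.1 + -(t • q.1), p.2 + t • ((-q.2) + (1/2 : ℝ) • fun i => (J i).mulVec p.1 ⬝ᵥ q.1)) := by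
      intro p
      refine Prod.ext ?_ ?_
      · show p.1 + t • (δp p).1 = p.1 + -(t • q.1)
        simp only [hδp]
        rw [smul_neg]
      · rfl
    have h5 := hmp.lintegral_comp hGm
    rw [← h5]
    exact lintegral_congr fun p => by rw [hTeq p]
  have step45 : (∫⁻ t in Set.Ioc (0:ℝ) 1, ∫⁻ p,
        ENNReal.ofReal (ρ * (1 + c₁) * heisG d₁ d₂ H (p + t • δp p)))
      = ∫⁻ y, ENNReal.ofReal (ρ * (1 + c₁) * heisG d₁ d₂ H y) := by
    rw [lintegral_congr fun t => step4 t, setLIntegral_const]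
    simp [Real.volume_Ioc]
  rw [step1]
  exact step2.trans (le_of_eq (step3.trans step45))

/-- Cancellation estimate on a group of Heisenberg type: if `f` is an
`L¹` function supported in `{|y| ≤ ρ, |v| ≤ ρ}` with mean zero, and `H ∈ C¹` has
integrable gradients, then
`‖f*H‖₁ ≤ C ρ ‖f‖₁ (‖∇_x H‖₁ + ‖∇_u H‖₁ + ∬ |x||∇_u H|)`. -/
theorem heisenberg_atom_convolution_bound (d₁ d₂ : ℕ) (hd₁ : 1 ≤ d₁) (hd₂ : 1 ≤ d₂)
    (J : Fin d₂ → Matrix (Fin d₁) (Fin d₁) ℝ) (hJ : ∀ i, (J i)ᵀ = -(J i)) :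
    ∃ C : ℝ, ∀ ρ : ℝ, 0 < ρ → ρ ≤ 1 →
      ∀ f : (Fin d₁ → ℝ) × (Fin d₂ → ℝ) → ℂ, Integrable f →
        (Function.support f ⊆ {q | eNorm' d₁ q.1 ≤ ρ ∧ eNorm' d₂ q.2 ≤ ρ}) →
        (∫ q, f q) = 0 →
      ∀ H : (Fin d₁ → ℝ) × (Fin d₂ → ℝ) → ℂ, ContDiff ℝ 1 H → Integrable H →
        Integrable (fun p => gradXNorm d₁ d₂ H p) →
        Integrable (fun p => gradUNorm d₁ d₂ H p) →
        Integrable (fun p => eNorm' d₁ p.1 * gradUNorm d₁ d₂ H p) →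
        (∫⁻ p, (‖heisConv d₁ d₂ J f H p‖₊ : ENNReal))
          ≤ ENNReal.ofReal
              (C * ρ * (∫ q, ‖f q‖) *
                ((∫ p, gradXNorm d₁ d₂ H p) + (∫ p, gradUNorm d₁ d₂ H p) +
                  ∫ p, eNorm' d₁ p.1 * gradUNorm d₁ d₂ H p)) := by
  refine ⟨1 + ∑ i, ∑ j, ∑ k, |J i j k|, ?_⟩
  intro ρ hρ hρ1 f hf hsupp hmean H hH hHint hgX hgU hxU
  set c₁ : ℝ := ∑ i, ∑ j, ∑ k, |J i j k| with hc₁def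
  have hc₁ : 0 ≤ c₁ := Finset.sum_nonneg fun _ _ => Finset.sum_nonneg fun _ _ =>
    Finset.sum_nonneg fun _ _ => abs_nonneg _
  set Δ : ((Fin d₁ → ℝ) × (Fin d₂ → ℝ)) → ((Fin d₁ → ℝ) × (Fin d₂ → ℝ)) → ℂ :=
    fun p q => H (p.1 - q.1, p.2 - q.2 + (1/2 : ℝ) • fun i => (J i).mulVec p.1 ⬝ᵥ q.1) - H p
    with hΔ
  -- Step 1: pointwise bound on the convolution using mean zero
  have step1 : ∀ p, (‖heisConv d₁ d₂ J f H p‖₊ : ENNReal)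
      ≤ ∫⁻ q, (‖f q‖₊ : ENNReal) * (‖Δ p q‖₊ : ENNReal) := by
    intro p
    by_cases hI : Integrable (fun q =>
        f q * H (p.1 - q.1, p.2 - q.2 + (1/2 : ℝ) • fun i => (J i).mulVec p.1 ⬝ᵥ q.1))
    · have h2 : Integrable fun q : (Fin d₁ → ℝ) × (Fin d₂ → ℝ) => f q * H p := hf.mul_const _
      have h3 : (fun q : (Fin d₁ → ℝ) × (Fin d₂ → ℝ) => f q * Δ p q)
          = fun q => f q * H (p.1 - q.1, p.2 - q.2 + (1/2 : ℝ) • fun i => (J i).mulVec p.1 ⬝ᵥ q.1)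
            - f q * H p := by
        funext q; rw [hΔ]; ring
      have h4 : ∫ q, f q * Δ p q = heisConv d₁ d₂ J f H p := by
        rw [h3, integral_sub hI h2,
          show ∫ q, f q * H p = (∫ q, f q) * H p by
            simpa [smul_eq_mul] using integral_smul_const f (H p),
          hmean, zero_mul, sub_zero]
        rfl
      calc (‖heisConv d₁ d₂ J f H p‖₊ : ENNReal) = ‖∫ q, f q * Δ p q‖₊ := by rw [h4]
        _ ≤ ∫⁻ q, (‖f q * Δ p q‖₊ : ENNReal) := enorm_integral_le_lintegral_enorm _
        _ = ∫⁻ q, (‖f q‖₊ : ENNReal) * (‖Δ p q‖₊ : ENNReal) := by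
            simp [nnnorm_mul]
    · have : heisConv d₁ d₂ J f H p = 0 := integral_undef hI
      rw [this]
      simp
  -- measurability of Δ
  have hΔc : Continuous fun z : ((Fin d₁ → ℝ) × (Fin d₂ → ℝ)) × ((Fin d₁ → ℝ) × (Fin d₂ → ℝ)) =>
      Δ z.1 z.2 := by
    have hAc : Continuous fun z : ((Fin d₁ → ℝ) × (Fin d₂ → ℝ)) × ((Fin d₁ → ℝ) × (Fin d₂ → ℝ)) =>
        ((z.1.1 - z.2.1, z.1.2 - z.2.2 + (1/2 : ℝ) • fun i => (J i).mulVec z.1.1 ⬝ᵥ z.2.1) :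
          (Fin d₁ → ℝ) × (Fin d₂ → ℝ)) := by
      refine Continuous.prodMk (continuous_fst.fst.sub continuous_snd.fst) ?_
      exact (continuous_fst.snd.sub continuous_snd.snd).add
        (((continuous_vecJ d₁ d₂ J).comp
          (continuous_fst.fst.prodMk continuous_snd.fst)).const_smul (1/2 : ℝ))
    exact (hH.continuous.comp hAc).sub (hH.continuous.comp continuous_fst)
  -- Tonelli
  have swap : (∫⁻ p, ∫⁻ q, (‖f q‖₊ : ENNReal) * (‖Δ p q‖₊ : ENNReal))
      = ∫⁻ q, ∫⁻ p, (‖f q‖₊ : ENNReal) * (‖Δ p q‖₊ : ENNReal) := by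
    refine lintegral_lintegral_swap ?_
    exact ((hf.1.aemeasurable.comp_snd).aestronglyMeasurable.enorm).mul
      (hΔc.measurable.enorm.aemeasurable)
  set M : ENNReal := ∫⁻ y, ENNReal.ofReal (ρ * (1 + c₁) * heisG d₁ d₂ H y) with hM
  have hΦ : ∀ q, (‖f q‖₊ : ENNReal) * (∫⁻ p, (‖Δ p q‖₊ : ENNReal)) ≤ (‖f q‖₊ : ENNReal) * M := by
    intro q
    by_cases hfq : f q = 0
    · simp [hfq]
    · have hqS := hsupp (Function.mem_support.mpr hfq)
      exact mul_le_mul_right (key_local d₁ d₂ J ρ hρ hρ1 H hH q hqS.1 hqS.2) _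
  -- integrability of the weight and evaluation of M
  have hGint : Integrable (fun y => ρ * (1 + c₁) * heisG d₁ d₂ H y) := by
    unfold heisG
    exact ((hgX.add hgU).add hxU).const_mul _
  have hMval : M = ENNReal.ofReal (ρ * (1 + c₁) *
      ((∫ p, gradXNorm d₁ d₂ H p) + (∫ p, gradUNorm d₁ d₂ H p) +
        ∫ p, eNorm' d₁ p.1 * gradUNorm d₁ d₂ H p)) := by
    rw [hM, ← ofReal_integral_eq_lintegral_ofReal hGint
      (ae_of_all _ fun y => mul_nonneg (mul_nonneg hρ.le (by linarith)) (heisG_nonneg _ _ _ _))]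
    congr 1
    rw [integral_const_mul]
    congr 1
    unfold heisG
    have h1 : Integrable (fun p : (Fin d₁ → ℝ) × (Fin d₂ → ℝ) =>
        gradXNorm d₁ d₂ H p + gradUNorm d₁ d₂ H p) := hgX.add hgU
    rw [integral_add h1 hxU, integral_add hgX hgU]
  calc ∫⁻ p, (‖heisConv d₁ d₂ J f H p‖₊ : ENNReal)
      ≤ ∫⁻ p, ∫⁻ q, (‖f q‖₊ : ENNReal) * (‖Δ p q‖₊ : ENNReal) := lintegral_mono step1
    _ = ∫⁻ q, ∫⁻ p, (‖f q‖₊ : ENNReal) * (‖Δ p q‖₊ : ENNReal) := swap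
    _ = ∫⁻ q, (‖f q‖₊ : ENNReal) * ∫⁻ p, (‖Δ p q‖₊ : ENNReal) := by
        refine lintegral_congr fun q => ?_
        exact lintegral_const_mul _ ((hΔc.comp (Continuous.prodMk continuous_id
          continuous_const)).measurable.enorm)
    _ ≤ ∫⁻ q, (‖f q‖₊ : ENNReal) * M := lintegral_mono hΦ
    _ = (∫⁻ q, (‖f q‖₊ : ENNReal)) * M := lintegral_mul_const'' _ hf.1.enorm
    _ = ENNReal.ofReal (∫ q, ‖f q‖) * M := by
        rw [ofReal_integral_norm_eq_lintegral_enorm hf]; rfl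
    _ ≤ ENNReal.ofReal ((1 + c₁) * ρ * (∫ q, ‖f q‖) *
          ((∫ p, gradXNorm d₁ d₂ H p) + (∫ p, gradUNorm d₁ d₂ H p) +
            ∫ p, eNorm' d₁ p.1 * gradUNorm d₁ d₂ H p)) := by
        rw [hMval, ← ENNReal.ofReal_mul (integral_nonneg fun q => norm_nonneg _)]
        exact ENNReal.ofReal_le_ofReal (le_of_eq (by ring))
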